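/- Let l > 0 and let h : ℍ → [0,∞) be continuous with sup_{z ∈ 𝒰_l} |h(z) − Im z| < ∞ and κ := Lip((h − Im)|_{𝒰_l}) < ∞. Then the function H is Lipschitz with constant κ along the diagonal direction (1,1): for every (x₁,x₂) ∈ U_l and every s ∈ ℝ (so that also (x₁+s, x₂+s) ∈ U_l), |H(x₁+s, x₂+s) − H(x₁,x₂)| ≤ κ·|s|. -/

import Mathlib

noncomputable section

/-- The upper half-plane `ℍ = {z : 0 < Im z}` as a subset of `ℂ`. -/
def UHP : Set ℂ := {z : ℂ | 0 < z.im}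

/-- The hyperbolic geodesic of `ℍ` with endpoints `x, y ∈ ℝ`: the Euclidean semicircle
of center `(x+y)/2` and radius `|y−x|/2`. -/
def geodesicSet (x y : ℝ) : Set ℂ :=
  {z : ℂ | ∃ θ : ℝ, 0 < θ ∧ θ < Real.pi ∧
    z = (((x + y) / 2 : ℝ) : ℂ) + ((|y - x| / 2 : ℝ) : ℂ) * Complex.exp ((θ : ℂ) * Complex.I)}

/-- The truncation `h_l` of `h`: equal to `h z` if `Im z > l` and to `0` otherwise. -/
def truncate (h : ℂ → ℝ) (l : ℝ) (z : ℂ) : ℝ := if l < z.im then h z else 0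

/-- `H(x₁,x₂) := sup_{z ∈ γ(x₁,x₂)} h_l(z)`. -/
def Hfun (h : ℂ → ℝ) (l : ℝ) (x₁ x₂ : ℝ) : ℝ :=
  sSup (truncate h l '' geodesicSet x₁ x₂)

/-- `H₀(x₁,x₂) := |x₂ − x₁|/2`, the naive height of the geodesic `γ(x₁,x₂)`. -/
def H0fun (x₁ x₂ : ℝ) : ℝ := |x₂ - x₁| / 2

/-- `U_l := {(x₁,x₂) ∈ ℝ² : |x₂ − x₁| > 2l}`. -/
def Udom (l : ℝ) : Set (ℝ × ℝ) := {p : ℝ × ℝ | 2 * l < |p.2 - p.1|}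

lemma geodesic_shift (x y s : ℝ) :
    geodesicSet (x + s) (y + s) = (fun z => z + (s : ℂ)) '' geodesicSet x y := by
  ext z
  constructor
  · rintro ⟨θ, h1, h2, h3⟩
    refine ⟨z - s, ⟨θ, h1, h2, ?_⟩, by ring⟩
    rw [h3]
    have : |y + s - (x + s)| = |y - x| := by ring_nf
    rw [this]
    push_cast
    ring
  · rintro ⟨w, ⟨θ, h1, h2, h3⟩, rfl⟩
    refine ⟨θ, h1, h2, ?_⟩
    rw [h3]
    have : |y + s - (x + s)| = |y - x| := by ring_nf
    rw [this]
    push_cast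
    ring

lemma geodesic_nonempty (x y : ℝ) : (geodesicSet x y).Nonempty := by
  refine ⟨_, ⟨Real.pi / 2, by positivity, half_lt_self Real.pi_pos, rfl⟩⟩

lemma geodesic_im_le (x y : ℝ) {z : ℂ} (hz : z ∈ geodesicSet x y) : z.im ≤ |y - x| / 2 := by
  obtain ⟨θ, _, _, rfl⟩ := hz
  have : ((((x + y) / 2 : ℝ) : ℂ) + ((|y - x| / 2 : ℝ) : ℂ) * Complex.exp ((θ : ℂ) * Complex.I)).im
      = |y - x| / 2 * Real.sin θ := by
    simp [Complex.exp_ofReal_mul_I_im]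
  rw [this]
  have h1 : Real.sin θ ≤ 1 := Real.sin_le_one θ
  have h2 : (0 : ℝ) ≤ |y - x| / 2 := by positivity
  nlinarith

lemma truncate_bdd (h : ℂ → ℝ) (l : ℝ) (δ : ℝ) (hsup : ∀ z : ℂ, l < z.im → |h z - z.im| ≤ δ)
    (x y : ℝ) : BddAbove (truncate h l '' geodesicSet x y) := by
  refine ⟨max 0 (|y - x| / 2 + δ), ?_⟩
  rintro a ⟨z, hz, rfl⟩
  unfold truncate
  split
  · rename_i hlt
    have h1 := hsup z hlt
    have h2 := geodesic_im_le x y hz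
    have := abs_le.mp h1
    exact le_max_of_le_right (by linarith [this.2])
  · exact le_max_left _ _

lemma sSup_abs_le {S T : Set ℝ} (hS : S.Nonempty) (hT : T.Nonempty)
    (hSb : BddAbove S) (hTb : BddAbove T) (c : ℝ)
    (h1 : ∀ a ∈ S, ∃ b ∈ T, a ≤ b + c) (h2 : ∀ b ∈ T, ∃ a ∈ S, b ≤ a + c) :
    |sSup S - sSup T| ≤ c := by
  rw [abs_sub_le_iff]
  constructor
  · have : sSup S ≤ sSup T + c := by
      apply csSup_le hS
      rintro a ha
      obtain ⟨b, hb, hab⟩ := h1 a ha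
      exact hab.trans (by linarith [le_csSup hTb hb])
    linarith
  · have : sSup T ≤ sSup S + c := by
      apply csSup_le hT
      rintro b hb
      obtain ⟨a, ha, hab⟩ := h2 b hb
      exact hab.trans (by linarith [le_csSup hSb ha])
    linarith

lemma truncate_shift_diff (h : ℂ → ℝ) (l : ℝ) (κ : ℝ) (hκ : 0 ≤ κ)
    (hlip : ∀ z w : ℂ, l < z.im → l < w.im →
      |(h z - z.im) - (h w - w.im)| ≤ κ * ‖z - w‖) (s : ℝ) (z : ℂ) :
    |truncate h l (z + s) - truncate h l z| ≤ κ * |s| := by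
  have him : (z + (s : ℂ)).im = z.im := by simp
  unfold truncate
  rw [him]
  split
  · rename_i hlt
    have := hlip (z + s) z (by rwa [him]) hlt
    have habs : ‖z + s - z‖ = |s| := by
      simp
    rw [habs] at this
    have him2 : (z + (s : ℂ)).im = z.im := him
    calc |h (z + s) - h z| = |(h (z + s) - (z + (s:ℂ)).im) - (h z - z.im)| := by
          rw [him2]; ring_nf
      _ ≤ κ * |s| := this
  · simpa using mul_nonneg hκ (abs_nonneg s)

/-- `H` is Lipschitz with constant `κ` in the diagonal direction `(1,1)`, where `κ` is
(a bound for) the Lipschitz constant of `(h − Im)|_{𝒰_l}`. -/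
theorem H_lipschitz_diagonal_direction (l : ℝ) (hl : 0 < l) (h : ℂ → ℝ)
    (hcont : ContinuousOn h UHP) (hnn : ∀ z ∈ UHP, 0 ≤ h z)
    (δ : ℝ) (hsup : ∀ z : ℂ, l < z.im → |h z - z.im| ≤ δ)
    (κ : ℝ) (hκ : 0 ≤ κ)
    (hlip : ∀ z w : ℂ, l < z.im → l < w.im →
      |(h z - z.im) - (h w - w.im)| ≤ κ * ‖z - w‖) :
    ∀ x₁ x₂ s : ℝ, 2 * l < |x₂ - x₁| →
      |Hfun h l (x₁ + s) (x₂ + s) - Hfun h l x₁ x₂| ≤ κ * |s| := by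
  intro x₁ x₂ s _
  unfold Hfun
  have hSeq : truncate h l '' geodesicSet (x₁ + s) (x₂ + s)
      = (fun z => truncate h l (z + (s : ℂ))) '' geodesicSet x₁ x₂ := by
    rw [geodesic_shift, Set.image_image]
  rw [hSeq]
  apply sSup_abs_le
  · exact (geodesic_nonempty x₁ x₂).image _
  · exact (geodesic_nonempty x₁ x₂).image _
  · rw [← Set.image_image, ← geodesic_shift]
    exact truncate_bdd h l δ hsup _ _
  · exact truncate_bdd h l δ hsup _ _
  · rintro a ⟨z, hz, rfl⟩
    refine ⟨truncate h l z, ⟨z, hz, rfl⟩, ?_⟩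
    have := abs_le.mp (truncate_shift_diff h l κ hκ hlip s z)
    linarith [this.2]
  · rintro b ⟨z, hz, rfl⟩
    refine ⟨truncate h l (z + s), ⟨z, hz, rfl⟩, ?_⟩
    have := abs_le.mp (truncate_shift_diff h l κ hκ hlip s z)
    linarith [this.1]
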